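/- Let G be a DAG with topological order v_1,...,v_n, G_i = G[{v_1,...,v_i}], and S_i the union of all frontier antichains of G_i (the support). If v_i ∈ S_j for some j ≥ i, then v_i ∈ S_t for all t with i ≤ t ≤ j. -/

import Mathlib

open Relation

/-- A directed graph (edge relation `E`) is acyclic. -/
def Acyclic {V : Type*} (E : V → V → Prop) : Prop := ∀ v, ¬ TransGen E v v

/-- `A` is an antichain: its vertices are pairwise non-reachable
(reachability = reflexive-transitive closure of `E`). -/
def IsAC {V : Type*} (E : V → V → Prop) (A : Finset V) : Prop :=
  ∀ a ∈ A, ∀ b ∈ A, a ≠ b → ¬ ReflTransGen E a b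

/-- `B` dominates `A`: same size, and every vertex of `B` is reachable from some vertex of `A`. -/
def Dom {V : Type*} (E : V → V → Prop) (B A : Finset V) : Prop :=
  B.card = A.card ∧ ∀ b ∈ B, ∃ a ∈ A, ReflTransGen E a b

/-- A frontier antichain: an antichain not dominated by any other antichain. -/
def Frontier {V : Type*} (E : V → V → Prop) (A : Finset V) : Prop :=
  IsAC E A ∧ ∀ B : Finset V, IsAC E B → B ≠ A → ¬ Dom E B A

/-- The identity order on `Fin n` is a topological order for `E`. -/
def Topo {n : ℕ} (E : Fin n → Fin n → Prop) : Prop := ∀ u v, E u v → (u : ℕ) < (v : ℕ)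

/-- The edge relation of the induced subgraph `G_i` on the first `i` vertices. -/
def Erest {n : ℕ} (E : Fin n → Fin n → Prop) (i : ℕ) (u v : Fin n) : Prop :=
  E u v ∧ (u : ℕ) < i ∧ (v : ℕ) < i

/-- `A` is a frontier antichain of the induced subgraph `G_i` on the first `i` vertices. -/
def FrontierIn {n : ℕ} (E : Fin n → Fin n → Prop) (i : ℕ) (A : Finset (Fin n)) : Prop :=
  (∀ a ∈ A, (a : ℕ) < i) ∧ IsAC (Erest E i) A ∧
  ∀ B : Finset (Fin n), (∀ b ∈ B, (b : ℕ) < i) → IsAC (Erest E i) B → B ≠ A →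
    ¬ Dom (Erest E i) B A

/-- The support `S_i`: union of all frontier antichains of `G_i`. -/
def SupportIn {n : ℕ} (E : Fin n → Fin n → Prop) (i : ℕ) : Set (Fin n) :=
  {v | ∃ A : Finset (Fin n), FrontierIn E i A ∧ v ∈ A}

lemma rtg_mono {n : ℕ} (E : Fin n → Fin n → Prop) {s t : ℕ} (hst : s ≤ t) {a b : Fin n}
    (h : ReflTransGen (Erest E s) a b) : ReflTransGen (Erest E t) a b :=
  ReflTransGen.mono (fun _ _ ⟨he, hu, hv⟩ => ⟨he, hu.trans_le hst, hv.trans_le hst⟩) a b h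

lemma rtg_restrict {n : ℕ} {E : Fin n → Fin n → Prop} (hE : Topo E) {t : ℕ} {a b : Fin n}
    (h : ReflTransGen (Erest E (t+1)) a b) (hb : (b : ℕ) < t) :
    ReflTransGen (Erest E t) a b := by
  induction h with
  | refl => exact .refl
  | @tail c d h' he ih =>
    have hc : (c : ℕ) < t := lt_trans (hE _ _ he.1) hb
    exact (ih hc).tail ⟨he.1, hc, hb⟩

lemma rtg_from_top {n : ℕ} {E : Fin n → Fin n → Prop} (hE : Topo E) {t : ℕ} {w x : Fin n}
    (hw : (w : ℕ) = t) (h : ReflTransGen (Erest E (t+1)) w x) : x = w := by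
  induction h with
  | refl => rfl
  | @tail c d h' he ih =>
    subst ih
    have h1 := hE _ _ he.1
    have h2 := he.2.2
    omega

lemma step {n : ℕ} {E : Fin n → Fin n → Prop} (hE : Topo E) (v : Fin n) (t : ℕ)
    (htn : t < n) (hv : (v : ℕ) < t) (h : v ∈ SupportIn E (t+1)) : v ∈ SupportIn E t := by
  obtain ⟨A, ⟨hAlt, hAac, hAfr⟩, hvA⟩ := h
  set w : Fin n := ⟨t, htn⟩ with hw
  have hwval : (w : ℕ) = t := rfl
  by_cases hwA : w ∈ A
  · -- v ∈ A.erase w, and A.erase w is frontier in G_t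
    have hvw : v ≠ w := by intro e; rw [e] at hv; omega
    have hA'lt : ∀ a ∈ A.erase w, (a : ℕ) < t := by
      intro a ha
      have h1 := hAlt a (Finset.mem_of_mem_erase ha)
      have h2 : a ≠ w := Finset.ne_of_mem_erase ha
      have : (a : ℕ) ≠ t := fun e => h2 (Fin.ext e)
      omega
    refine ⟨A.erase w, ⟨hA'lt, ?_, ?_⟩, Finset.mem_erase.2 ⟨hvw, hvA⟩⟩
    · intro a ha b hb hab hr
      exact hAac a (Finset.mem_of_mem_erase ha) b (Finset.mem_of_mem_erase hb) hab
        (rtg_mono E (Nat.le_succ t) hr)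
    · rintro B hBlt hBac hBne ⟨hBcard, hBdom⟩
      -- no b ∈ B reaches w in G_{t+1}
      have hnoreach : ∀ b ∈ B, ¬ ReflTransGen (Erest E (t+1)) b w := by
        intro b hb hr
        obtain ⟨a, ha, har⟩ := hBdom b hb
        have haw : a ≠ w := Finset.ne_of_mem_erase ha
        have : ReflTransGen (Erest E (t+1)) a w :=
          (rtg_mono E (Nat.le_succ t) har).trans hr
        exact hAac a (Finset.mem_of_mem_erase ha) w hwA haw this
      have hwB : w ∉ B := fun hb => by have := hBlt w hb; omega
      -- B' = insert w B dominates A in G_{t+1}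
      apply hAfr (insert w B)
      · intro b hb
        rcases Finset.mem_insert.1 hb with rfl | hb
        · omega
        · have := hBlt b hb; omega
      · intro a ha b hb hab hr
        rcases Finset.mem_insert.1 ha with rfl | ha
        · exact hab ((rtg_from_top hE hwval hr).symm)
        · rcases Finset.mem_insert.1 hb with rfl | hb
          · exact hnoreach a ha hr
          · exact hBac a ha b hb hab (rtg_restrict hE hr (hBlt b hb))
      · intro e
        apply hBne
        have : B = (insert w B).erase w := (Finset.erase_insert hwB).symm
        rw [this, e]
      · constructor
        · rw [Finset.card_insert_of_notMem hwB, hBcard,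
            Finset.card_erase_of_mem hwA]
          have : 0 < A.card := Finset.card_pos.2 ⟨w, hwA⟩
          omega
        · intro b hb
          rcases Finset.mem_insert.1 hb with rfl | hb
          · exact ⟨w, hwA, .refl⟩
          · obtain ⟨a, ha, har⟩ := hBdom b hb
            exact ⟨a, Finset.mem_of_mem_erase ha, rtg_mono E (Nat.le_succ t) har⟩
  · -- A itself is frontier in G_t
    have hA'lt : ∀ a ∈ A, (a : ℕ) < t := by
      intro a ha
      have h1 := hAlt a ha
      have : (a : ℕ) ≠ t := fun e => hwA (by have : a = w := Fin.ext e; rwa [this] at ha)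
      omega
    refine ⟨A, ⟨hA'lt, ?_, ?_⟩, hvA⟩
    · intro a ha b hb hab hr
      exact hAac a ha b hb hab (rtg_mono E (Nat.le_succ t) hr)
    · rintro B hBlt hBac hBne ⟨hBcard, hBdom⟩
      apply hAfr B
      · intro b hb; have := hBlt b hb; omega
      · intro a ha b hb hab hr
        exact hBac a ha b hb hab (rtg_restrict hE hr (hBlt b hb))
      · exact hBne
      · exact ⟨hBcard, fun b hb => by
          obtain ⟨a, ha, har⟩ := hBdom b hb
          exact ⟨a, ha, rtg_mono E (Nat.le_succ t) har⟩⟩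

lemma down {n : ℕ} {E : Fin n → Fin n → Prop} (hE : Topo E) (v : Fin n) (t : ℕ) :
    ∀ k, t + k ≤ n → (v : ℕ) < t → v ∈ SupportIn E (t + k) → v ∈ SupportIn E t := by
  intro k
  induction k with
  | zero => intro _ _ h; exact h
  | succ k ih =>
    intro hn hv h
    exact ih (by omega) hv (step hE v (t+k) (by omega) (by omega) h)

/-- if `v_i ∈ S_j` for some `j ≥ i` then `v_i ∈ S_t` for all `i ≤ t ≤ j`
(here `v` has index `v.val`, so it first appears in `G_{v.val + 1}`). -/
theorem support_interval {n : ℕ} (E : Fin n → Fin n → Prop) (hE : Topo E)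
    (v : Fin n) (j : ℕ) (hj : j ≤ n) (h : v ∈ SupportIn E j)
    (t : ℕ) (ht1 : (v : ℕ) < t) (ht2 : t ≤ j) :
    v ∈ SupportIn E t := by
  obtain ⟨k, rfl⟩ : ∃ k, j = t + k := ⟨j - t, by omega⟩
  exact down hE v t k hj ht1 h
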